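/- Let W and P⁺ be d×d real symmetric positive definite matrices and α > 0. Let W^{1/2} P⁺ W^{1/2} = Uᵀ D U be an eigendecomposition with U orthogonal and D = diag(σ₁², …, σ_d²) (all σᵢ² > 0). Define Φ = diag(min{α/2, σ₁²}, …, min{α/2, σ_d²}) and P* = W^{−1/2} Uᵀ Φ U W^{−1/2}. Then P* is symmetric positive definite, P⁺ − P* is positive semidefinite, and for every d×d real symmetric positive definite matrix P such that P⁺ − P is positive semidefinite, tr(W P*) − (α/2)·log det(P*) ≤ tr(W P) − (α/2)·log det(P). (Theorem 2: reverse water-filling solution of the rate-distortion problem.) -/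

import Mathlib

open Matrix

open scoped ComplexOrder in
/-- The square root of a positive semidefinite matrix, as defined in the older Mathlib
(removed since). -/
noncomputable def Matrix.PosSemidef.sqrt {n 𝕜 : Type*} [Fintype n] [DecidableEq n] [RCLike 𝕜]
    {A : Matrix n n 𝕜} (hA : A.PosSemidef) : Matrix n n 𝕜 :=
  hA.1.eigenvectorUnitary.1 * diagonal (((↑) : ℝ → 𝕜) ∘ (hA.1.eigenvalues · |>.sqrt)) *
  (star hA.1.eigenvectorUnitary : Matrix n n 𝕜)

lemma Matrix.PosSemidef.sqrt_mul_self {d : ℕ} {A : Matrix (Fin d) (Fin d) ℝ}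
    (hA : A.PosSemidef) : hA.sqrt * hA.sqrt = A := by
  have hsp := hA.1.spectral_theorem
  rw [Unitary.conjStarAlgAut_apply] at hsp
  conv_rhs => rw [hsp]
  unfold Matrix.PosSemidef.sqrt
  rw [show ∀ X Y Z : Matrix (Fin d) (Fin d) ℝ, X * Y * Z * (X * Y * Z) = X * (Y * (Z * X) * Y) * Z
    from fun X Y Z => by simp only [Matrix.mul_assoc], Unitary.coe_star_mul_self,
    Matrix.mul_one, diagonal_mul_diagonal]
  congr 2
  apply congrArg diagonal
  funext i
  simp [Real.mul_self_sqrt (hA.eigenvalues_nonneg i)]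

lemma Matrix.PosSemidef.posSemidef_sqrt {d : ℕ} {A : Matrix (Fin d) (Fin d) ℝ}
    (hA : A.PosSemidef) : hA.sqrt.PosSemidef := by
  unfold Matrix.PosSemidef.sqrt
  have hD : (diagonal (((↑) : ℝ → ℝ) ∘ (hA.1.eigenvalues · |>.sqrt))).PosSemidef :=
    Matrix.posSemidef_diagonal_iff.mpr fun i => by simp [Real.sqrt_nonneg]
  have := hD.conjTranspose_mul_mul_same (star hA.1.eigenvectorUnitary : Matrix (Fin d) (Fin d) ℝ)
  rw [Matrix.star_eq_conjTranspose, conjTranspose_conjTranspose, ← Matrix.star_eq_conjTranspose] at this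
  exact this

lemma posDef_conj_aux {d : ℕ} {A B : Matrix (Fin d) (Fin d) ℝ} (hA : A.PosDef)
    (hB : IsUnit B.det) : (Bᵀ * A * B).PosDef := by
  rw [← Matrix.conjTranspose_eq_transpose_of_trivial]
  exact hA.conjTranspose_mul_mul_same
    (Matrix.mulVec_injective_iff_isUnit.mpr ((Matrix.isUnit_iff_isUnit_det B).mpr hB))

lemma psd_diag_nonneg {d : ℕ} {M : Matrix (Fin d) (Fin d) ℝ} (hM : M.PosSemidef)
    (i : Fin d) : 0 ≤ M i i := by
  simpa [dotProduct, Matrix.mulVec, Pi.single_apply, Finset.sum_ite_eq,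
    Finset.sum_ite_eq'] using hM.dotProduct_mulVec_nonneg (Pi.single i 1)

lemma log_det_le_trace {d : ℕ} {M : Matrix (Fin d) (Fin d) ℝ} (hM : M.PosDef) :
    Real.log M.det ≤ M.trace - d := by
  have hev := hM.eigenvalues_pos
  have hdet : M.det = ∏ i, hM.isHermitian.eigenvalues i := by
    simpa using hM.isHermitian.det_eq_prod_eigenvalues
  have htr : M.trace = ∑ i, hM.isHermitian.eigenvalues i := by
    conv_lhs => rw [hM.isHermitian.spectral_theorem, Unitary.conjStarAlgAut_apply]
    rw [Matrix.trace_mul_cycle]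
    rw [show (star (hM.isHermitian.eigenvectorUnitary : Matrix (Fin d) (Fin d) ℝ)) *
      (hM.isHermitian.eigenvectorUnitary : Matrix (Fin d) (Fin d) ℝ) = 1 from
      Unitary.coe_star_mul_self _]
    simp [Matrix.trace_diagonal]
  rw [hdet, htr, Real.log_prod (fun i _ => (hev i).ne')]
  calc ∑ i, Real.log (hM.isHermitian.eigenvalues i)
      ≤ ∑ i, (hM.isHermitian.eigenvalues i - 1) :=
        Finset.sum_le_sum fun i _ => Real.log_le_sub_one_of_pos (hev i)
    _ = (∑ i, hM.isHermitian.eigenvalues i) - d := by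
        rw [Finset.sum_sub_distrib]; simp

lemma key_ineq {d : ℕ} (c : ℝ) (hc : 0 < c) (σ : Fin d → ℝ) (hσ : ∀ i, 0 < σ i)
    (Q : Matrix (Fin d) (Fin d) ℝ) (hQ : Q.PosDef) (hQd : ∀ i, Q i i ≤ σ i)
    (hlog : Real.log Q.det ≤ Q.trace - d) :
    True := trivial

lemma key_ineq' {d : ℕ} (c : ℝ) (hc : 0 < c) (σ : Fin d → ℝ) (hσ : ∀ i, 0 < σ i)
    (Q : Matrix (Fin d) (Fin d) ℝ) (hQ : Q.PosDef) (hQd : ∀ i, Q i i ≤ σ i)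
    (logdet : ∀ {M : Matrix (Fin d) (Fin d) ℝ}, M.PosDef → Real.log M.det ≤ M.trace - d) :
    (∑ i, min c (σ i)) - c * Real.log (∏ i, min c (σ i)) ≤ Q.trace - c * Real.log Q.det := by
  set φ : Fin d → ℝ := fun i => min c (σ i) with hφdef
  have hφ : ∀ i, 0 < φ i := fun i => lt_min hc (hσ i)
  set a : Fin d → ℝ := fun i => (Real.sqrt (φ i))⁻¹ with hadef
  have ha : ∀ i, 0 < a i := fun i => inv_pos.mpr (Real.sqrt_pos.mpr (hφ i))
  have haa : ∀ i, a i * a i = (φ i)⁻¹ := fun i => by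
    rw [hadef, ← mul_inv, Real.mul_self_sqrt (hφ i).le]
  set M : Matrix (Fin d) (Fin d) ℝ := diagonal a * Q * diagonal a with hMdef
  have hadet : IsUnit (diagonal a).det := by
    rw [Matrix.det_diagonal]
    exact isUnit_iff_ne_zero.mpr (Finset.prod_ne_zero_iff.mpr fun i _ => (ha i).ne')
  have hMpd : M.PosDef := by
    have := posDef_conj_aux (A := Q) (B := diagonal a) hQ hadet
    rwa [Matrix.diagonal_transpose] at this
  have hMdet : M.det = Q.det * ∏ i, (φ i)⁻¹ := by
    rw [hMdef, Matrix.det_mul, Matrix.det_mul, Matrix.det_diagonal]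
    rw [show (∏ i, a i) * Q.det * (∏ i, a i) = Q.det * ∏ i, (a i * a i) by
      rw [Finset.prod_mul_distrib]; ring]
    simp_rw [haa]
  have hMtr : M.trace = ∑ i, Q i i / φ i := by
    rw [Matrix.trace]
    apply Finset.sum_congr rfl
    intro i _
    simp only [Matrix.diag_apply, hMdef, Matrix.mul_apply, Matrix.diagonal_apply,
      ite_mul, zero_mul, mul_ite, mul_zero, Finset.sum_ite_eq, Finset.sum_ite_eq',
      Finset.mem_univ, if_true]
    rw [div_eq_mul_inv, ← haa i]; ring
  have h1 : Real.log Q.det - ∑ i, Real.log (φ i) ≤ (∑ i, Q i i / φ i) - d := by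
    have := logdet hMpd
    rw [hMdet, hMtr, Real.log_mul hQ.det_pos.ne'
      (Finset.prod_ne_zero_iff.mpr fun i _ => (inv_pos.mpr (hφ i)).ne'),
      Real.log_prod (fun i _ => (inv_pos.mpr (hφ i)).ne')] at this
    simp_rw [Real.log_inv] at this
    rw [Finset.sum_neg_distrib] at this
    linarith [this]
  have h2 : 0 ≤ ∑ i, (Q i i - φ i) * (1 - c / φ i) := by
    apply Finset.sum_nonneg
    intro i _
    rcases le_or_gt c (σ i) with h | h
    · have : φ i = c := min_eq_left h
      rw [this, div_self hc.ne', sub_self, mul_zero]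
    · have hφi : φ i = σ i := min_eq_right h.le
      have e1 : Q i i - φ i ≤ 0 := by rw [hφi]; linarith [hQd i]
      have e2 : 1 - c / φ i ≤ 0 := by
        rw [hφi, sub_nonpos, le_div_iff₀ (hσ i), one_mul]; linarith
      nlinarith [e1, e2]
  have htrQ : Q.trace = ∑ i, Q i i := rfl
  have h3 : ∑ i, (Q i i - φ i) * (1 - c / φ i)
      = ((∑ i, Q i i) - ∑ i, φ i) - c * ((∑ i, Q i i / φ i) - d) := by
    have expand : ∀ i ∈ Finset.univ, (Q i i - φ i) * (1 - c / φ i)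
        = (Q i i - c * (Q i i / φ i)) - (φ i - c) := by
      intro i _
      have hne : φ i ≠ 0 := (hφ i).ne'
      field_simp
    rw [Finset.sum_congr rfl expand, Finset.sum_sub_distrib, Finset.sum_sub_distrib,
      Finset.sum_sub_distrib, ← Finset.mul_sum, Finset.sum_const, Finset.card_univ,
      Fintype.card_fin, nsmul_eq_mul, mul_sub]
    ring
  have h4 : c * (Real.log Q.det - ∑ i, Real.log (φ i))
      ≤ c * ((∑ i, Q i i / φ i) - d) := mul_le_mul_of_nonneg_left h1 hc.le
  rw [Real.log_prod (fun i _ => (hφ i).ne'), htrQ]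
  linarith [h2, h3 ▸ h2, h4]

/-- Theorem 2 (reverse water-filling): with `W^{1/2} P⁺ W^{1/2} = Uᵀ D U`,
`D = diag(σᵢ²)`, `Φ = diag(min{α/2, σᵢ²})` and
`P* = W^{−1/2} Uᵀ Φ U W^{−1/2}`, the matrix `P*` is symmetric positive
definite, satisfies `P* ⪯ P⁺`, and minimizes
`tr(W P) − (α/2) log det P` over all symmetric positive definite `P ⪯ P⁺`. -/
theorem reverse_water_filling {d : ℕ}
    (W Pplus : Matrix (Fin d) (Fin d) ℝ) (hW : W.PosDef) (hPplus : Pplus.PosDef)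
    (α : ℝ) (hα : 0 < α)
    (U : Matrix (Fin d) (Fin d) ℝ) (hU : U * Uᵀ = 1) (hU' : Uᵀ * U = 1)
    (σsq : Fin d → ℝ) (hσ : ∀ i, 0 < σsq i)
    (hdecomp : hW.posSemidef.sqrt * Pplus * hW.posSemidef.sqrt
        = Uᵀ * Matrix.diagonal σsq * U)
    (Pstar : Matrix (Fin d) (Fin d) ℝ)
    (hPstar : Pstar = (hW.posSemidef.sqrt)⁻¹ * Uᵀ *
        Matrix.diagonal (fun i => min (α / 2) (σsq i)) * U *
        (hW.posSemidef.sqrt)⁻¹) :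
    Pstar.PosDef ∧ (Pplus - Pstar).PosSemidef ∧
      ∀ P : Matrix (Fin d) (Fin d) ℝ, P.PosDef → (Pplus - P).PosSemidef →
        (W * Pstar).trace - (α / 2) * Real.log Pstar.det ≤
          (W * P).trace - (α / 2) * Real.log P.det := by
  set c : ℝ := α / 2 with hcdef
  have hc : 0 < c := by positivity
  set φ : Fin d → ℝ := fun i => min c (σsq i) with hφdef
  have hφ : ∀ i, 0 < φ i := fun i => lt_min hc (hσ i)
  set S : Matrix (Fin d) (Fin d) ℝ := hW.posSemidef.sqrt with hSdef
  have hS2 : S * S = W := hW.posSemidef.sqrt_mul_self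
  have hSh : Sᵀ = S := by
    rw [← Matrix.conjTranspose_eq_transpose_of_trivial]
    exact hW.posSemidef.posSemidef_sqrt.isHermitian
  have hSdetsq : S.det * S.det = W.det := by rw [← Matrix.det_mul, hS2]
  have hSdet : IsUnit S.det := by
    rw [isUnit_iff_ne_zero]
    intro h
    have := hW.det_pos
    rw [← hSdetsq, h, mul_zero] at this
    exact lt_irrefl _ this
  have hS1 : S⁻¹ * S = 1 := Matrix.nonsing_inv_mul _ hSdet
  have hS1' : S * S⁻¹ = 1 := Matrix.mul_nonsing_inv _ hSdet
  have hSinvT : (S⁻¹)ᵀ = S⁻¹ := by rw [Matrix.transpose_nonsing_inv, hSh]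
  have hUdet : IsUnit U.det := Matrix.isUnit_det_of_right_inverse hU
  have hUtdet : IsUnit Uᵀ.det := by rwa [Matrix.det_transpose]
  have hSinvdet : IsUnit (S⁻¹).det := by
    rw [Matrix.det_nonsing_inv, isUnit_iff_ne_zero]
    simpa using isUnit_iff_ne_zero.mp hSdet
  -- cancellation helpers
  have hcS : ∀ X : Matrix (Fin d) (Fin d) ℝ, S * (S⁻¹ * X) = X := fun X => by
    rw [← Matrix.mul_assoc, hS1', Matrix.one_mul]
  have hcS' : ∀ X : Matrix (Fin d) (Fin d) ℝ, S⁻¹ * (S * X) = X := fun X => by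
    rw [← Matrix.mul_assoc, hS1, Matrix.one_mul]
  have hcU : ∀ X : Matrix (Fin d) (Fin d) ℝ, U * (Uᵀ * X) = X := fun X => by
    rw [← Matrix.mul_assoc, hU, Matrix.one_mul]
  have hcU' : ∀ X : Matrix (Fin d) (Fin d) ℝ, Uᵀ * (U * X) = X := fun X => by
    rw [← Matrix.mul_assoc, hU', Matrix.one_mul]
  set B : Matrix (Fin d) (Fin d) ℝ := U * S⁻¹ with hBdef
  have hBt : Bᵀ = S⁻¹ * Uᵀ := by rw [hBdef, Matrix.transpose_mul, hSinvT]
  have hBdet : IsUnit B.det := by rw [hBdef, Matrix.det_mul]; exact hUdet.mul hSinvdet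
  have hPstarB : Pstar = Bᵀ * Matrix.diagonal φ * B := by
    rw [hPstar, hBt, hBdef]
    simp only [Matrix.mul_assoc]
  have part1 : Pstar.PosDef := by
    rw [hPstarB]
    exact posDef_conj_aux (Matrix.posDef_diagonal_iff.mpr hφ) hBdet
  have hPplusB : Pplus = Bᵀ * Matrix.diagonal σsq * B := by
    have e1 : S⁻¹ * (S * Pplus * S) * S⁻¹ = Pplus := by
      simp only [Matrix.mul_assoc]
      rw [hS1', Matrix.mul_one, hcS' Pplus]
    rw [← e1, hdecomp, hBt, hBdef]
    simp only [Matrix.mul_assoc]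
  have part2 : (Pplus - Pstar).PosSemidef := by
    have heq : Pplus - Pstar = Bᵀ * Matrix.diagonal (fun i => σsq i - φ i) * B := by
      have hdd : Matrix.diagonal σsq - Matrix.diagonal φ
          = Matrix.diagonal (fun i => σsq i - φ i) := by
        rw [← Matrix.diagonal_sub]
      rw [hPplusB, hPstarB, ← Matrix.sub_mul, ← Matrix.mul_sub, hdd]
    have hpsd : (Matrix.diagonal (fun i => σsq i - φ i)).PosSemidef :=
      Matrix.posSemidef_diagonal_iff.mpr fun i => sub_nonneg.mpr (min_le_right _ _)
    have := hpsd.conjTranspose_mul_mul_same B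
    rwa [Matrix.conjTranspose_eq_transpose_of_trivial, ← heq] at this
  refine ⟨part1, part2, ?_⟩
  intro P hP hPPle
  have hSUdet : IsUnit (S * Uᵀ).det := by rw [Matrix.det_mul]; exact hSdet.mul hUtdet
  have h1 : U.det * Uᵀ.det = 1 := by rw [← Matrix.det_mul, hU, Matrix.det_one]
  have hWfact : (S * Uᵀ) * (U * S) = W := by
    simp only [Matrix.mul_assoc]
    rw [hcU' S, hS2]
  have hQstar : (U * S) * Pstar * (S * Uᵀ) = Matrix.diagonal φ := by
    rw [hPstar]
    simp only [Matrix.mul_assoc]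
    rw [hcS' Uᵀ, hU, Matrix.mul_one, hcS (Uᵀ * Matrix.diagonal φ),
      hcU (Matrix.diagonal φ)]
  have hQplus : (U * S) * Pplus * (S * Uᵀ) = Matrix.diagonal σsq := by
    have e : (U * S) * Pplus * (S * Uᵀ) = U * (S * Pplus * S) * Uᵀ := by
      simp only [Matrix.mul_assoc]
    rw [e, hdecomp]
    simp only [Matrix.mul_assoc]
    rw [hU, Matrix.mul_one, hcU (Matrix.diagonal σsq)]
  set Q : Matrix (Fin d) (Fin d) ℝ := (U * S) * P * (S * Uᵀ) with hQdef
  have hQpd : Q.PosDef := by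
    have := posDef_conj_aux (A := P) (B := S * Uᵀ) hP hSUdet
    rwa [Matrix.transpose_mul, Matrix.transpose_transpose, hSh] at this
  have hQdiag : ∀ i, Q i i ≤ σsq i := by
    have hsub : Matrix.diagonal σsq - Q = (U * S) * (Pplus - P) * (S * Uᵀ) := by
      rw [hQdef, Matrix.mul_sub, Matrix.sub_mul, hQplus]
    have hpsd2 := hPPle.mul_mul_conjTranspose_same (U * S)
    rw [Matrix.conjTranspose_eq_transpose_of_trivial, Matrix.transpose_mul, hSh,
      ← hsub] at hpsd2
    intro i
    have h0 := psd_diag_nonneg hpsd2 i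
    simp only [Matrix.sub_apply, Matrix.diagonal_apply_eq] at h0
    linarith
  have htrP : (W * P).trace = Q.trace := by
    rw [hQdef, Matrix.trace_mul_cycle, hWfact]
  have htrPstar : (W * Pstar).trace = (Matrix.diagonal φ).trace := by
    rw [← hQstar, Matrix.trace_mul_cycle, hWfact]
  have hdetP : Q.det = P.det * W.det := by
    rw [hQdef]
    simp only [Matrix.det_mul]
    linear_combination (P.det * S.det * S.det) * h1 + P.det * hSdetsq
  have hdetPstar : (Matrix.diagonal φ).det = Pstar.det * W.det := by
    rw [← hQstar]
    simp only [Matrix.det_mul]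
    linear_combination (Pstar.det * S.det * S.det) * h1 + Pstar.det * hSdetsq
  have hlogφ : Real.log (∏ i, φ i) = Real.log Pstar.det + Real.log W.det := by
    rw [← Matrix.det_diagonal, hdetPstar,
      Real.log_mul part1.det_pos.ne' hW.det_pos.ne']
  have hlogQ : Real.log Q.det = Real.log P.det + Real.log W.det := by
    rw [hdetP, Real.log_mul hP.det_pos.ne' hW.det_pos.ne']
  have key := key_ineq' c hc σsq hσ Q hQpd hQdiag (fun {M} hM => log_det_le_trace hM)
  have e1 : Real.log Pstar.det = Real.log (∏ i, φ i) - Real.log W.det := by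
    linarith [hlogφ]
  have e2 : Real.log P.det = Real.log Q.det - Real.log W.det := by
    linarith [hlogQ]
  rw [htrPstar, htrP, e1, e2, Matrix.trace_diagonal]
  simp only [hφdef]
  linarith [key]
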